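/- Pruning update: with S_{t,t'} = {μ : h_{t,t'}(μ) = H_t(μ)} (the set of μ for which a last change-point at t' is optimal at time t) and I_{t,t'} = {μ : h_{t,t'}(μ) ≤ C_t}, one has S_{t+1,t'} = S_{t,t'} ∩ I_{t,t'} for all t with t > t' ≥ k. -/

import Mathlib

/-- Candidate cost `h_{t,s}(μ) = C_s + ∑_{i=s+1}^{t} γ(Y_i)(μ)`. -/
noncomputable def candCost {A : Type*} (Y : ℕ → A) (γ : A → ℝ → ℝ) (C : ℕ → ℝ)
    (t s : ℕ) (μ : ℝ) : ℝ :=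
  C s + ∑ i ∈ Finset.Ioc s t, γ (Y i) μ

/-- `H_t(μ) = min_{k ≤ s < t} h_{t,s}(μ)`. -/
noncomputable def Hfun {A : Type*} (Y : ℕ → A) (γ : A → ℝ → ℝ) (C : ℕ → ℝ)
    (k t : ℕ) (μ : ℝ) : ℝ :=
  sInf {x : ℝ | ∃ s : ℕ, k ≤ s ∧ s < t ∧ x = candCost Y γ C t s μ}

/-- `S_{t,t'}`: the set of `μ` for which a last change-point at `t'` is optimal at time `t`. -/
noncomputable def Sset {A : Type*} (Y : ℕ → A) (γ : A → ℝ → ℝ) (C : ℕ → ℝ)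
    (k t t' : ℕ) : Set ℝ :=
  {μ : ℝ | candCost Y γ C t t' μ = Hfun Y γ C k t μ}

/-- `I_{t,t'}`: the set of `μ` where candidate `t'` beats the candidate entering at `t`. -/
noncomputable def Iset {A : Type*} (Y : ℕ → A) (γ : A → ℝ → ℝ) (C : ℕ → ℝ)
    (t t' : ℕ) : Set ℝ :=
  {μ : ℝ | candCost Y γ C t t' μ ≤ C t}

private lemma hset_eq_image {A : Type*} (Y : ℕ → A) (γ : A → ℝ → ℝ) (C : ℕ → ℝ)
    (k t : ℕ) (μ : ℝ) :
    {x : ℝ | ∃ s : ℕ, k ≤ s ∧ s < t ∧ x = candCost Y γ C t s μ}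
      = (fun s => candCost Y γ C t s μ) '' (Set.Ico k t) := by
  ext x
  constructor
  · rintro ⟨s, h1, h2, rfl⟩; exact ⟨s, ⟨h1, h2⟩, rfl⟩
  · rintro ⟨s, ⟨h1, h2⟩, rfl⟩; exact ⟨s, h1, h2, rfl⟩

private lemma hset_finite {A : Type*} (Y : ℕ → A) (γ : A → ℝ → ℝ) (C : ℕ → ℝ)
    (k t : ℕ) (μ : ℝ) :
    Set.Finite {x : ℝ | ∃ s : ℕ, k ≤ s ∧ s < t ∧ x = candCost Y γ C t s μ} := by
  rw [hset_eq_image]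
  exact (Set.finite_Ico k t).image _

private lemma candCost_succ {A : Type*} (Y : ℕ → A) (γ : A → ℝ → ℝ) (C : ℕ → ℝ)
    {t s : ℕ} (h : s ≤ t) (μ : ℝ) :
    candCost Y γ C (t + 1) s μ = candCost Y γ C t s μ + γ (Y (t + 1)) μ := by
  unfold candCost
  rw [Finset.sum_Ioc_succ_top h]
  ring

private lemma candCost_self {A : Type*} (Y : ℕ → A) (γ : A → ℝ → ℝ) (C : ℕ → ℝ)
    (t : ℕ) (μ : ℝ) : candCost Y γ C t t μ = C t := by
  simp [candCost]

private lemma Hfun_succ {A : Type*} (Y : ℕ → A) (γ : A → ℝ → ℝ) (C : ℕ → ℝ)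
    {k t : ℕ} (hkt : k < t) (μ : ℝ) :
    Hfun Y γ C k (t + 1) μ = min (C t) (Hfun Y γ C k t μ) + γ (Y (t + 1)) μ := by
  set g := γ (Y (t + 1)) μ with hg
  set S := {x : ℝ | ∃ s : ℕ, k ≤ s ∧ s < t ∧ x = candCost Y γ C t s μ} with hS
  have hSne : S.Nonempty := ⟨candCost Y γ C t k μ, k, le_refl k, hkt, rfl⟩
  have hSbd : BddBelow S := (hset_finite Y γ C k t μ).bddBelow
  have hset : {x : ℝ | ∃ s : ℕ, k ≤ s ∧ s < t + 1 ∧ x = candCost Y γ C (t + 1) s μ}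
      = (fun x => x + g) '' (insert (C t) S) := by
    ext x
    constructor
    · rintro ⟨s, h1, h2, rfl⟩
      have hs : s ≤ t := Nat.lt_succ_iff.mp h2
      rcases lt_or_eq_of_le hs with hlt | rfl
      · exact ⟨candCost Y γ C t s μ, Or.inr ⟨s, h1, hlt, rfl⟩, (candCost_succ Y γ C hs μ).symm⟩
      · exact ⟨C s, Or.inl rfl, by
          rw [← candCost_self Y γ C s μ]; exact (candCost_succ Y γ C hs μ).symm⟩
    · rintro ⟨y, hy | ⟨s, h1, h2, rfl⟩, rfl⟩
      · subst hy
        exact ⟨t, le_of_lt hkt, Nat.lt_succ_self t, by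
          rw [candCost_succ Y γ C le_rfl μ, candCost_self]⟩
      · exact ⟨s, h1, h2.trans (Nat.lt_succ_self t),
          (candCost_succ Y γ C (le_of_lt h2) μ).symm⟩
  have hmono : Monotone (fun x : ℝ => x + g) := fun a b hab => add_le_add_left hab g
  have hcont : ContinuousAt (fun x : ℝ => x + g) (sInf (insert (C t) S)) :=
    (continuous_add_right g).continuousAt
  have := hmono.map_csInf_of_continuousAt hcont (Set.insert_nonempty _ _) (hSbd.insert _)
  unfold Hfun
  rw [hset, ← this, csInf_insert hSbd hSne]

private lemma Hfun_le {A : Type*} (Y : ℕ → A) (γ : A → ℝ → ℝ) (C : ℕ → ℝ)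
    {k t t' : ℕ} (hk : k ≤ t') (ht : t' < t) (μ : ℝ) :
    Hfun Y γ C k t μ ≤ candCost Y γ C t t' μ :=
  csInf_le (hset_finite Y γ C k t μ).bddBelow ⟨t', hk, ht, rfl⟩

/-- Pruning update: `S_{t+1,t'} = S_{t,t'} ∩ I_{t,t'}` for `t > t' ≥ k`. -/
theorem pruning_update {A : Type*} (Y : ℕ → A) (γ : A → ℝ → ℝ) (C : ℕ → ℝ)
    (k t t' : ℕ) (hk : k ≤ t') (ht : t' < t) :
    Sset Y γ C k (t + 1) t' = Sset Y γ C k t t' ∩ Iset Y γ C t t' := by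
  have hkt : k < t := lt_of_le_of_lt hk ht
  ext μ
  have hHle := Hfun_le Y γ C hk ht μ
  simp only [Sset, Iset, Set.mem_setOf_eq, Set.mem_inter_iff]
  rw [candCost_succ Y γ C (le_of_lt ht) μ, Hfun_succ Y γ C hkt μ, add_right_cancel_iff]
  constructor
  · intro h
    have h1 : candCost Y γ C t t' μ ≤ Hfun Y γ C k t μ := h.le.trans (min_le_right _ _)
    have h2 : candCost Y γ C t t' μ ≤ C t := h.le.trans (min_le_left _ _)
    exact ⟨le_antisymm h1 hHle, h2⟩
  · rintro ⟨h1, h2⟩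
    rw [h1] at h2 ⊢
    exact (min_eq_right h2).symm
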